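/- In the first construction, at every index α, the t values z^i_{j,θ}(α) = a^{b^m(α)}(⟨β + ω_i + ⌊j/η_i⌋⟩_{t/R}) + β·(t/R), ranging over all levels i, users j of level i, and θ ∈ {0,...,r_i-1} (with β = b^{i,⟨j⟩_{η_i}}(α) + θ·η_i, η_i = R/r_i, ω_i = (∑_{ζ<i} u_ζ r_ζ)/R), are pairwise distinct, assuming ∑_i u_i r_i = t, R | t, r_i | R for all i, a^{b^m(α)} is a permutation of {0,...,t/R-1}, and b^{i,ε} = ⟨b^{i,0} + ε⟩_{η_i}. -/

import Mathlib

/-- First construction, zero Hamming correlation at a fixed index α: the t values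
z^i_{j,θ} = π(⟨β + ωᵢ + ⌊j/ηᵢ⌋⟩_{t/R}) + β·(t/R), with β = (b⁰ᵢ + ⟨j⟩_{ηᵢ}) mod ηᵢ + θ·ηᵢ,
ηᵢ = R/rᵢ, ωᵢ = (∑_{ζ<i} u_ζ r_ζ)/R, ranging over all levels i, users j of level i
and θ < rᵢ, are pairwise distinct. -/
theorem first_construction_distinct (L t R : ℕ) (ht : 0 < t) (hRpos : 0 < R)
    (hR : R ∣ t) [NeZero (t / R)]
    (r u : Fin L → ℕ) (hrpos : ∀ i, 0 < r i) (hr : ∀ i, r i ∣ R)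
    (hsum : ∑ i, u i * r i = t)
    (hω : ∀ i : Fin L, R ∣ ∑ ζ ∈ Finset.univ.filter (· < i), u ζ * r ζ)
    (π : Equiv.Perm (ZMod (t / R)))
    (b₀ : Fin L → ℕ) (hb₀ : ∀ i, b₀ i < R / r i) :
    Function.Injective (fun s : Σ i : Fin L, Fin (u i) × Fin (r i) =>
      let η := R / r s.1
      let ω := (∑ ζ ∈ Finset.univ.filter (· < s.1), u ζ * r ζ) / R
      let β := (b₀ s.1 + (s.2.1 : ℕ) % η) % η + (s.2.2 : ℕ) * η
      (π (((β + ω + (s.2.1 : ℕ) / η : ℕ)) : ZMod (t / R))).val + β * (t / R)) := by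
  have htR : 0 < t / R := Nat.pos_of_ne_zero (NeZero.ne _)
  have hη : ∀ i, 0 < R / r i := fun i => Nat.div_pos (Nat.le_of_dvd hRpos (hr i)) (hrpos i)
  have hηr : ∀ i, R / r i * r i = R := fun i => Nat.div_mul_cancel (hr i)
  have hωR : ∀ i, (∑ ζ ∈ Finset.univ.filter (· < i), u ζ * r ζ) / R * R
      = ∑ ζ ∈ Finset.univ.filter (· < i), u ζ * r ζ := fun i => Nat.div_mul_cancel (hω i)
  -- bound: (ω i + j / η i) * R < partial sum up to and including i
  have hkey : ∀ (i : Fin L) (j : Fin (u i)),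
      ((∑ ζ ∈ Finset.univ.filter (· < i), u ζ * r ζ) / R + (j : ℕ) / (R / r i)) * R
      < (∑ ζ ∈ Finset.univ.filter (· < i), u ζ * r ζ) + u i * r i := by
    intro i j
    rw [add_mul, hωR i]
    have h1 : (j : ℕ) / (R / r i) * R = (j : ℕ) / (R / r i) * (R / r i) * r i := by
      rw [mul_assoc, hηr i]
    have h2 : (j : ℕ) / (R / r i) * (R / r i) ≤ (j : ℕ) := Nat.div_mul_le_self _ _
    have h3 : (j : ℕ) * r i < u i * r i := (Nat.mul_lt_mul_right (hrpos i)).mpr j.isLt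
    have : (j : ℕ) / (R / r i) * R < u i * r i := by
      rw [h1]; exact lt_of_le_of_lt (Nat.mul_le_mul_right _ h2) h3
    omega
  have hpart : ∀ i : Fin L,
      (∑ ζ ∈ Finset.univ.filter (· < i), u ζ * r ζ) + u i * r i ≤ t := by
    intro i
    rw [← hsum]
    have : (∑ ζ ∈ Finset.univ.filter (· < i), u ζ * r ζ) + u i * r i
        = ∑ ζ ∈ insert i (Finset.univ.filter (· < i)), u ζ * r ζ := by
      rw [Finset.sum_insert (by simp)]; ring
    rw [this]
    exact Finset.sum_le_sum_of_subset (by simp)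
  have hmono : ∀ i₁ i₂ : Fin L, i₁ < i₂ →
      (∑ ζ ∈ Finset.univ.filter (· < i₁), u ζ * r ζ) + u i₁ * r i₁
      ≤ ∑ ζ ∈ Finset.univ.filter (· < i₂), u ζ * r ζ := by
    intro i₁ i₂ h
    have : (∑ ζ ∈ Finset.univ.filter (· < i₁), u ζ * r ζ) + u i₁ * r i₁
        = ∑ ζ ∈ insert i₁ (Finset.univ.filter (· < i₁)), u ζ * r ζ := by
      rw [Finset.sum_insert (by simp)]; ring
    rw [this]
    refine Finset.sum_le_sum_of_subset ?_
    intro x hx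
    simp only [Finset.mem_insert, Finset.mem_filter, Finset.mem_univ, true_and] at hx ⊢
    rcases hx with rfl | hx
    · exact h
    · exact hx.trans h
  -- main argument
  rintro ⟨i₁, j₁, θ₁⟩ ⟨i₂, j₂, θ₂⟩ heq
  simp only at heq
  have hv₁ : (π ((((b₀ i₁ + (j₁ : ℕ) % (R / r i₁)) % (R / r i₁) + (θ₁ : ℕ) * (R / r i₁))
      + (∑ ζ ∈ Finset.univ.filter (· < i₁), u ζ * r ζ) / R + (j₁ : ℕ) / (R / r i₁) : ℕ)
      : ZMod (t / R))).val < t / R := ZMod.val_lt _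
  have hv₂ : (π ((((b₀ i₂ + (j₂ : ℕ) % (R / r i₂)) % (R / r i₂) + (θ₂ : ℕ) * (R / r i₂))
      + (∑ ζ ∈ Finset.univ.filter (· < i₂), u ζ * r ζ) / R + (j₂ : ℕ) / (R / r i₂) : ℕ)
      : ZMod (t / R))).val < t / R := ZMod.val_lt _
  -- extract β equality
  have hβeq : (b₀ i₁ + (j₁ : ℕ) % (R / r i₁)) % (R / r i₁) + (θ₁ : ℕ) * (R / r i₁)
      = (b₀ i₂ + (j₂ : ℕ) % (R / r i₂)) % (R / r i₂) + (θ₂ : ℕ) * (R / r i₂) := by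
    have h1 := congrArg (· / (t / R)) heq
    simp only [Nat.add_mul_div_right _ _ htR] at h1
    rwa [Nat.div_eq_of_lt hv₁, Nat.div_eq_of_lt hv₂, zero_add, zero_add] at h1
  rw [hβeq] at heq
  have hveq : (π ((((b₀ i₂ + (j₂ : ℕ) % (R / r i₂)) % (R / r i₂) + (θ₂ : ℕ) * (R / r i₂))
      + (∑ ζ ∈ Finset.univ.filter (· < i₁), u ζ * r ζ) / R + (j₁ : ℕ) / (R / r i₁) : ℕ)
      : ZMod (t / R))).val
      = (π ((((b₀ i₂ + (j₂ : ℕ) % (R / r i₂)) % (R / r i₂) + (θ₂ : ℕ) * (R / r i₂))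
      + (∑ ζ ∈ Finset.univ.filter (· < i₂), u ζ * r ζ) / R + (j₂ : ℕ) / (R / r i₂) : ℕ)
      : ZMod (t / R))).val := by omega
  have hxeq := π.injective (ZMod.val_injective _ hveq)
  -- cancel β and pass to naturals
  have hωd : (∑ ζ ∈ Finset.univ.filter (· < i₁), u ζ * r ζ) / R + (j₁ : ℕ) / (R / r i₁)
      = (∑ ζ ∈ Finset.univ.filter (· < i₂), u ζ * r ζ) / R + (j₂ : ℕ) / (R / r i₂) := by
    have hc : (((∑ ζ ∈ Finset.univ.filter (· < i₁), u ζ * r ζ) / R + (j₁ : ℕ) / (R / r i₁) : ℕ)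
        : ZMod (t / R))
        = (((∑ ζ ∈ Finset.univ.filter (· < i₂), u ζ * r ζ) / R + (j₂ : ℕ) / (R / r i₂) : ℕ)
        : ZMod (t / R)) := by
      have h := hxeq
      push_cast at h ⊢
      linear_combination h
    have hlt₁ : (∑ ζ ∈ Finset.univ.filter (· < i₁), u ζ * r ζ) / R + (j₁ : ℕ) / (R / r i₁)
        < t / R := by
      refine (Nat.lt_div_iff_mul_lt' hR _).mpr ?_
      rw [mul_comm]
      exact lt_of_lt_of_le (hkey i₁ j₁) (hpart i₁)
    have hlt₂ : (∑ ζ ∈ Finset.univ.filter (· < i₂), u ζ * r ζ) / R + (j₂ : ℕ) / (R / r i₂)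
        < t / R := by
      refine (Nat.lt_div_iff_mul_lt' hR _).mpr ?_
      rw [mul_comm]
      exact lt_of_lt_of_le (hkey i₂ j₂) (hpart i₂)
    have := congrArg ZMod.val hc
    rwa [ZMod.val_cast_of_lt hlt₁, ZMod.val_cast_of_lt hlt₂] at this
  -- levels are equal
  have hii : i₁ = i₂ := by
    by_contra hne
    rcases lt_or_gt_of_ne hne with h | h
    · have h1 := hkey i₁ j₁
      have h2 := hmono i₁ i₂ h
      have h3 := hωR i₂
      have h4 : ((∑ ζ ∈ Finset.univ.filter (· < i₂), u ζ * r ζ) / R) * R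
          ≤ ((∑ ζ ∈ Finset.univ.filter (· < i₂), u ζ * r ζ) / R + (j₂ : ℕ) / (R / r i₂)) * R :=
        Nat.mul_le_mul_right _ (Nat.le_add_right _ _)
      have h5 : ((∑ ζ ∈ Finset.univ.filter (· < i₁), u ζ * r ζ) / R + (j₁ : ℕ) / (R / r i₁)) * R
          = ((∑ ζ ∈ Finset.univ.filter (· < i₂), u ζ * r ζ) / R + (j₂ : ℕ) / (R / r i₂)) * R := by
        rw [hωd]
      omega
    · have h1 := hkey i₂ j₂
      have h2 := hmono i₂ i₁ h
      have h3 := hωR i₁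
      have h4 : ((∑ ζ ∈ Finset.univ.filter (· < i₁), u ζ * r ζ) / R) * R
          ≤ ((∑ ζ ∈ Finset.univ.filter (· < i₁), u ζ * r ζ) / R + (j₁ : ℕ) / (R / r i₁)) * R :=
        Nat.mul_le_mul_right _ (Nat.le_add_right _ _)
      have h5 : ((∑ ζ ∈ Finset.univ.filter (· < i₁), u ζ * r ζ) / R + (j₁ : ℕ) / (R / r i₁)) * R
          = ((∑ ζ ∈ Finset.univ.filter (· < i₂), u ζ * r ζ) / R + (j₂ : ℕ) / (R / r i₂)) * R := by
        rw [hωd]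
      omega
  subst hii
  -- user quotients equal
  have hdiv : (j₁ : ℕ) / (R / r i₁) = (j₂ : ℕ) / (R / r i₁) := by omega
  -- θ equal
  have hm₁ : (b₀ i₁ + (j₁ : ℕ) % (R / r i₁)) % (R / r i₁) < R / r i₁ := Nat.mod_lt _ (hη i₁)
  have hm₂ : (b₀ i₁ + (j₂ : ℕ) % (R / r i₁)) % (R / r i₁) < R / r i₁ := Nat.mod_lt _ (hη i₁)
  have hθ : (θ₁ : ℕ) = (θ₂ : ℕ) := by
    have h1 := congrArg (· / (R / r i₁)) hβeq
    simp only [Nat.add_mul_div_right _ _ (hη i₁)] at h1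
    rwa [Nat.div_eq_of_lt hm₁, Nat.div_eq_of_lt hm₂, zero_add, zero_add] at h1
  have hθη : (θ₁ : ℕ) * (R / r i₁) = (θ₂ : ℕ) * (R / r i₁) := by rw [hθ]
  have hres : (b₀ i₁ + (j₁ : ℕ) % (R / r i₁)) % (R / r i₁)
      = (b₀ i₁ + (j₂ : ℕ) % (R / r i₁)) % (R / r i₁) := by omega
  have hjm : (j₁ : ℕ) % (R / r i₁) = (j₂ : ℕ) % (R / r i₁) := by
    have h1 : (b₀ i₁ + (j₁ : ℕ) % (R / r i₁)) ≡ (b₀ i₁ + (j₂ : ℕ) % (R / r i₁))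
        [MOD (R / r i₁)] := hres
    have h2 := Nat.ModEq.add_left_cancel' _ h1
    exact h2.eq_of_lt_of_lt (Nat.mod_lt _ (hη i₁)) (Nat.mod_lt _ (hη i₁))
  have hjj : (j₁ : ℕ) = (j₂ : ℕ) := by
    have e1 := Nat.div_add_mod (j₁ : ℕ) (R / r i₁)
    have e2 := Nat.div_add_mod (j₂ : ℕ) (R / r i₁)
    have e3 : (R / r i₁) * ((j₁ : ℕ) / (R / r i₁)) = (R / r i₁) * ((j₂ : ℕ) / (R / r i₁)) := by
      rw [hdiv]
    omega
  obtain rfl : j₁ = j₂ := Fin.ext hjj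
  obtain rfl : θ₁ = θ₂ := Fin.ext hθ
  rfl
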